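/- Let f be a function on finite binary strings that is monotone (u a prefix of v implies f(u) a prefix of or equal to f(v)), strict (for every u there is an extension v of u with f(v) ≠ f(u)), and preserves length-wise adjacency (if |u| = |v| and |val(u) − val(v)| = 1 then |val(f(u)) − val(f(v))| ≤ 1 and |f(u)| = |f(v)|). Then the induced map on [0,1], sending the real represented by an infinite binary sequence s to the real represented by the limit of f on the prefixes of s, is well-defined: equivalent sequences have equivalent images. -/

import Mathlib

/-- Base-2 value of a binary string. -/
def valList : List (Fin 2) → ℕ :=
  List.foldl (fun n d => 2 * n + d.val) 0

/-- The length-`k` prefix of an infinite binary sequence, as a binary string. -/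
def pre (s : ℕ → Fin 2) (k : ℕ) : List (Fin 2) := (List.range k).map s

/-- The real number in `[0,1]` represented by an infinite binary sequence. -/
noncomputable def phi (s : ℕ → Fin 2) : ℝ := ∑' i : ℕ, ((s i : ℕ) : ℝ) / 2 ^ (i + 1)

lemma foldl_val (v : List (Fin 2)) : ∀ n : ℕ,
    List.foldl (fun n d => 2 * n + d.val) n v = n * 2 ^ v.length + valList v := by
  induction v with
  | nil => intro n; simp [valList]
  | cons d v ih =>
    intro n
    have h1 : valList (d :: v) = d.val * 2 ^ v.length + valList v := by
      show List.foldl _ (2 * 0 + d.val) v = _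
      rw [ih]; ring_nf
    simp only [List.foldl_cons, List.length_cons, h1, ih]
    ring

lemma valList_cons (d : Fin 2) (v : List (Fin 2)) :
    valList (d :: v) = d.val * 2 ^ v.length + valList v := by
  show List.foldl _ (2 * 0 + d.val) v = _
  rw [foldl_val]; ring_nf

lemma valList_lt (u : List (Fin 2)) : valList u < 2 ^ u.length := by
  induction u with
  | nil => simp [valList]
  | cons d v ih =>
    rw [valList_cons, List.length_cons, pow_succ]
    have hd : d.val ≤ 1 := by omega
    have := Nat.mul_le_mul_right (2 ^ v.length) hd
    nlinarith

lemma valList_append (u v : List (Fin 2)) :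
    valList (u ++ v) = valList u * 2 ^ v.length + valList v := by
  show List.foldl _ 0 (u ++ v) = _
  rw [List.foldl_append, foldl_val]
  rfl

lemma valList_inj (u v : List (Fin 2)) (hl : u.length = v.length)
    (hv : valList u = valList v) : u = v := by
  induction u generalizing v with
  | nil => cases v with
    | nil => rfl
    | cons b w => simp at hl
  | cons a u ih =>
    cases v with
    | nil => simp at hl
    | cons b w =>
      simp only [List.length_cons, Nat.add_right_cancel_iff] at hl
      rw [valList_cons, valList_cons, hl] at hv
      have h1 := valList_lt u
      have h2 := valList_lt w
      rw [hl] at h1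
      have hval : a.val = b.val ∧ valList u = valList w := by
        have ha : a.val ≤ 1 := by omega
        have hb : b.val ≤ 1 := by omega
        interval_cases h : a.val <;> interval_cases h' : b.val <;> omega
      rw [ih w hl hval.2, Fin.ext hval.1]


lemma pre_length (s : ℕ → Fin 2) (k : ℕ) : (pre s k).length = k := by simp [pre]

lemma pre_take (s : ℕ → Fin 2) {a b : ℕ} (hab : a ≤ b) : pre s a = (pre s b).take a := by
  rw [pre, pre, ← List.map_take, List.take_range, Nat.min_eq_left hab]

lemma pre_mono (s : ℕ → Fin 2) {a b : ℕ} (hab : a ≤ b) : pre s a <+: pre s b := by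
  rw [pre_take s hab]; exact List.take_prefix _ _

lemma phi_summable (s : ℕ → Fin 2) :
    Summable (fun i : ℕ => ((s i : ℕ) : ℝ) / 2 ^ (i + 1)) := by
  apply Summable.of_nonneg_of_le (fun i => by positivity) (fun i => ?_)
    (summable_geometric_of_lt_one (by norm_num) (by norm_num) : Summable fun i : ℕ => (1/2 : ℝ) ^ i)
  have h1 : ((s i : ℕ) : ℝ) ≤ 1 := by
    have : (s i).val ≤ 1 := by omega
    exact_mod_cast this
  calc ((s i : ℕ) : ℝ) / 2 ^ (i + 1) ≤ 1 / 2 ^ (i + 1) := by gcongr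
    _ ≤ 1 / 2 ^ i := by gcongr <;> norm_num
    _ = (1/2:ℝ) ^ i := by rw [div_pow, one_pow]

lemma valList_pre_div (s : ℕ → Fin 2) (k : ℕ) :
    (valList (pre s k) : ℝ) / 2 ^ k = ∑ i ∈ Finset.range k, ((s i : ℕ) : ℝ) / 2 ^ (i + 1) := by
  induction k with
  | zero => simp [pre, valList]
  | succ k ih =>
    have hp : pre s (k+1) = pre s k ++ [s k] := by
      rw [pre, pre, List.range_succ, List.map_append]; rfl
    have hv : valList (pre s (k+1)) = 2 * valList (pre s k) + (s k).val := by
      rw [hp, valList_append]; simp [valList]; ring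
    rw [Finset.sum_range_succ, ← ih, hv]
    push_cast
    have h2 : (2:ℝ) ^ (k+1) ≠ 0 := by positivity
    field_simp
    ring

lemma phi_bounds (s : ℕ → Fin 2) (k : ℕ) :
    (valList (pre s k) : ℝ) / 2 ^ k ≤ phi s ∧
    phi s ≤ (valList (pre s k) : ℝ) / 2 ^ k + 1 / 2 ^ k := by
  have hsum := phi_summable s
  have hsplit := Summable.sum_add_tsum_nat_add k hsum
  have htail_nonneg : 0 ≤ ∑' i : ℕ, ((s (i + k) : ℕ) : ℝ) / 2 ^ (i + k + 1) :=
    tsum_nonneg (fun i => by positivity)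
  have htail_le : ∑' i : ℕ, ((s (i + k) : ℕ) : ℝ) / 2 ^ (i + k + 1) ≤ 1 / 2 ^ k := by
    have hb : ∀ i : ℕ, ((s (i + k) : ℕ) : ℝ) / 2 ^ (i + k + 1) ≤ (1/2:ℝ)^(k+1) * (1/2)^i := by
      intro i
      have h1 : ((s (i+k) : ℕ) : ℝ) ≤ 1 := by
        have : (s (i+k)).val ≤ 1 := by omega
        exact_mod_cast this
      have : (1/2:ℝ)^(k+1) * (1/2)^i = 1 / 2 ^ (i + k + 1) := by
        rw [div_pow, div_pow, one_pow, one_pow, div_mul_div_comm, one_mul, ← pow_add]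
        ring_nf
      rw [this]
      apply div_le_div_of_nonneg_right h1 (by positivity) |>.trans_eq rfl
    have hgs : Summable (fun i : ℕ => (1/2:ℝ)^(k+1) * (1/2)^i) :=
      (summable_geometric_of_lt_one (by norm_num) (by norm_num)).mul_left _
    have := Summable.tsum_le_tsum hb (by
      apply (phi_summable s).comp_injective (add_left_injective k) |>.congr
      intro i; rfl) hgs
    calc ∑' i : ℕ, ((s (i + k) : ℕ) : ℝ) / 2 ^ (i + k + 1)
        ≤ ∑' i : ℕ, (1/2:ℝ)^(k+1) * (1/2)^i := this
      _ = (1/2:ℝ)^(k+1) * ∑' i : ℕ, (1/2:ℝ)^i := tsum_mul_left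
      _ = (1/2:ℝ)^(k+1) * 2 := by rw [tsum_geometric_of_lt_one (by norm_num) (by norm_num)]; norm_num
      _ = 1 / 2 ^ k := by rw [div_pow, one_pow]; field_simp; ring
  rw [valList_pre_div]
  constructor
  · rw [phi, ← hsplit]; linarith
  · rw [phi, ← hsplit]; linarith

lemma val_close {s t : ℕ → Fin 2} (hst : phi s = phi t) (k : ℕ) :
    valList (pre s k) ≤ valList (pre t k) + 1 ∧ valList (pre t k) ≤ valList (pre s k) + 1 := by
  obtain ⟨h1, h2⟩ := phi_bounds s k
  obtain ⟨h3, h4⟩ := phi_bounds t k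
  rw [hst] at h1 h2
  have hP : (0:ℝ) < 2 ^ k := by positivity
  rw [← add_div, le_div_iff₀ hP] at h2 h4
  rw [div_le_iff₀ hP] at h1 h3
  constructor
  · have : (valList (pre s k) : ℝ) ≤ (valList (pre t k) : ℝ) + 1 := by linarith
    exact_mod_cast this
  · have : (valList (pre t k) : ℝ) ≤ (valList (pre s k) : ℝ) + 1 := by linarith
    exact_mod_cast this

lemma valList_take_decomp (A : List (Fin 2)) (m : ℕ) :
    valList A = valList (A.take m) * 2 ^ (A.length - m) + valList (A.drop m) ∧
    valList (A.drop m) < 2 ^ (A.length - m) := by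
  constructor
  · conv_lhs => rw [← List.take_append_drop m A]
    rw [valList_append, List.length_drop]
  · have := valList_lt (A.drop m)
    rwa [List.length_drop] at this

lemma close_take (A B : List (Fin 2)) (m : ℕ) (hL : A.length = B.length)
    (hd : |(valList A : ℤ) - valList B| ≤ 1) :
    valList (A.take m) ≤ valList (B.take m) + 1 ∧
    valList (B.take m) ≤ valList (A.take m) + 1 := by
  obtain ⟨dA, rA⟩ := valList_take_decomp A m
  obtain ⟨dB, rB⟩ := valList_take_decomp B m
  rw [← hL] at dB rB
  set P := 2 ^ (A.length - m) with hP'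
  have hP : 0 < P := by positivity
  have h1 : valList A ≤ valList B + 1 ∧ valList B ≤ valList A + 1 := by
    rw [abs_le] at hd; omega
  constructor
  · have hm : valList (A.take m) * P ≤ (valList (B.take m) + 1) * P := by
      rw [add_mul, one_mul]; linarith [h1.1]
    exact Nat.le_of_mul_le_mul_right hm hP
  · have hm : valList (B.take m) * P ≤ (valList (A.take m) + 1) * P := by
      rw [add_mul, one_mul]; linarith [h1.2]
    exact Nat.le_of_mul_le_mul_right hm hP

lemma phi_eq_of_close {g h : ℕ → Fin 2}
    (H : ∀ m : ℕ, valList (pre g m) ≤ valList (pre h m) + 1 ∧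
         valList (pre h m) ≤ valList (pre g m) + 1) : phi g = phi h := by
  have key : ∀ m : ℕ, |phi g - phi h| ≤ 2 * (1/2 : ℝ) ^ m := by
    intro m
    obtain ⟨h1, h2⟩ := phi_bounds g m
    obtain ⟨h3, h4⟩ := phi_bounds h m
    obtain ⟨c1, c2⟩ := H m
    have hc1 : (valList (pre g m) : ℝ) ≤ (valList (pre h m) : ℝ) + 1 := by exact_mod_cast c1
    have hc2 : (valList (pre h m) : ℝ) ≤ (valList (pre g m) : ℝ) + 1 := by exact_mod_cast c2
    have hP : (0:ℝ) < 2 ^ m := by positivity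
    have e1 : (valList (pre g m) : ℝ) / 2 ^ m ≤ (valList (pre h m) : ℝ) / 2 ^ m + 1 / 2 ^ m := by
      rw [← add_div]; gcongr
    have e2 : (valList (pre h m) : ℝ) / 2 ^ m ≤ (valList (pre g m) : ℝ) / 2 ^ m + 1 / 2 ^ m := by
      rw [← add_div]; gcongr
    have hhalf : (1/2:ℝ)^m = 1 / 2 ^ m := by rw [div_pow, one_pow]
    rw [abs_le, hhalf]
    constructor <;> linarith
  have htend : Filter.Tendsto (fun m : ℕ => 2 * (1/2 : ℝ) ^ m) Filter.atTop (nhds 0) := by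
    have := (tendsto_pow_atTop_nhds_zero_of_lt_one (show (0:ℝ) ≤ 1/2 by norm_num)
      (by norm_num)).const_mul (2:ℝ)
    simpa using this
  have h0 : |phi g - phi h| ≤ 0 := ge_of_tendsto' htend key
  have h1 := abs_nonneg (phi g - phi h)
  have h2 : |phi g - phi h| = 0 := le_antisymm h0 h1
  linarith [sub_eq_zero.mp (abs_eq_zero.mp h2)]

/-- Let `f` be a function on finite binary strings that is monotone, strict and
preserves length-wise adjacency. Then the induced map on `[0,1]` is well-defined:
if `s` and `t` represent the same real, and `g` (resp. `h`) is the induced infinite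
image of `s` (resp. `t`) — i.e. every prefix of `g` is a prefix of some `f(s|k)` —
then `g` and `h` represent the same real. -/
theorem stmt_12 (f : List (Fin 2) → List (Fin 2))
    (hmono : ∀ u v : List (Fin 2), u <+: v → f u <+: f v)
    (hstrict : ∀ u : List (Fin 2), ∃ v : List (Fin 2), u <+: v ∧ f v ≠ f u)
    (hadj : ∀ u v : List (Fin 2), u.length = v.length →
      |(valList u : ℤ) - (valList v : ℤ)| = 1 →
      |(valList (f u) : ℤ) - (valList (f v) : ℤ)| ≤ 1 ∧ (f u).length = (f v).length)
    (s t g h : ℕ → Fin 2)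
    (hst : phi s = phi t)
    (hg : ∀ m : ℕ, ∃ k : ℕ, pre g m <+: f (pre s k))
    (hh : ∀ m : ℕ, ∃ k : ℕ, pre h m <+: f (pre t k)) :
    phi g = phi h := by
  apply phi_eq_of_close
  intro m
  obtain ⟨k1, hk1⟩ := hg m
  obtain ⟨k2, hk2⟩ := hh m
  set K := max k1 k2 with hK
  have hgm : pre g m <+: f (pre s K) :=
    hk1.trans (hmono _ _ (pre_mono s (le_max_left k1 k2)))
  have hhm : pre h m <+: f (pre t K) :=
    hk2.trans (hmono _ _ (pre_mono t (le_max_right k1 k2)))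
  have hgtake : pre g m = (f (pre s K)).take m := by
    have := List.prefix_iff_eq_take.mp hgm
    rwa [pre_length] at this
  have hhtake : pre h m = (f (pre t K)).take m := by
    have := List.prefix_iff_eq_take.mp hhm
    rwa [pre_length] at this
  obtain ⟨c1, c2⟩ := val_close hst K
  by_cases heq : valList (pre s K) = valList (pre t K)
  · have : pre s K = pre t K := valList_inj _ _ (by rw [pre_length, pre_length]) heq
    rw [hgtake, hhtake, this]
    omega
  · have hone : |(valList (pre s K) : ℤ) - (valList (pre t K) : ℤ)| = 1 := by
      rw [abs_eq (by norm_num : (0:ℤ) ≤ 1)]; omega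
    obtain ⟨hd, hL⟩ := hadj _ _ (by rw [pre_length, pre_length]) hone
    obtain ⟨e1, e2⟩ := close_take (f (pre s K)) (f (pre t K)) m hL hd
    rw [hgtake, hhtake]
    exact ⟨e1, e2⟩
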